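/- arXiv:1407.2346 — 2 statements merged into one kernel-verified Lean document; each statement's English description precedes it below -/
import Mathlib

section
/- Let p be a prime, A a commutative ring, σ a ring automorphism of A with σ^p = id, Ā = A^σ/N(A), and π : A^σ → Ā the quotient map. Let B be an integral domain and χ : Ā → B a (unital) ring homomorphism. Then there exists a unique ring homomorphism χ̃ : A → B such that χ̃(a) = χ(π(a))^p for all a ∈ A^σ; explicitly, χ̃(a) = χ(π(σ^0(a)·σ^1(a)·…·σ^{p−1}(a))), and χ̃ satisfies χ̃∘σ = χ̃. -/
/-- The fixed subring `A^σ` of a ring automorphism `σ` of a commutative ring `A`. -/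
def fixedSubring {A : Type*} [CommRing A] (σ : A ≃+* A) : Subring A where
  carrier := {a : A | σ a = a}
  zero_mem' := map_zero σ
  one_mem' := map_one σ
  add_mem' := by
    intro a b ha hb
    show σ (a + b) = a + b
    rw [map_add, ha, hb]
  mul_mem' := by
    intro a b ha hb
    show σ (a * b) = a * b
    rw [map_mul, ha, hb]
  neg_mem' := by
    intro a ha
    show σ (-a) = -a
    rw [map_neg, ha]

/-- The ideal `N(A)` of `A^σ` generated by the norms `N a = ∑_{i<p} σ^i a`. -/
def normIdeal (p : ℕ) {A : Type*} [CommRing A] (σ : A ≃+* A) :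
    Ideal (fixedSubring σ) :=
  Ideal.span {x : fixedSubring σ |
    ∃ a : A, (x : A) = ∑ i ∈ Finset.range p, (⇑σ)^[i] a}


section priv
variable {A : Type*} [CommRing A] (σ : A ≃+* A)

lemma my_iter_add (i : ℕ) (x y : A) : (⇑σ)^[i] (x+y) = (⇑σ)^[i] x + (⇑σ)^[i] y := by
  induction i with
  | zero => rfl
  | succ n ih => simp [Function.iterate_succ_apply', ih, map_add]

lemma my_iter_mul (i : ℕ) (x y : A) : (⇑σ)^[i] (x*y) = (⇑σ)^[i] x * (⇑σ)^[i] y := by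
  induction i with
  | zero => rfl
  | succ n ih => simp [Function.iterate_succ_apply', ih, map_mul]

lemma my_iter_one (i : ℕ) : (⇑σ)^[i] (1:A) = 1 := by
  induction i with
  | zero => rfl
  | succ n ih => simp [Function.iterate_succ_apply', ih]

lemma my_iter_zero (i : ℕ) : (⇑σ)^[i] (0:A) = 0 := by
  induction i with
  | zero => rfl
  | succ n ih => simp [Function.iterate_succ_apply', ih]

lemma my_iter_fixed (i : ℕ) (x : A) (hx : σ x = x) : (⇑σ)^[i] x = x := by
  induction i with
  | zero => rfl
  | succ n ih => simp [Function.iterate_succ_apply', ih, hx]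

lemma my_iter_sum (i : ℕ) {ι : Type*} (s : Finset ι) (f : ι → A) :
    (⇑σ)^[i] (∑ j ∈ s, f j) = ∑ j ∈ s, (⇑σ)^[i] (f j) := by
  induction i with
  | zero => rfl
  | succ n ih => simp [Function.iterate_succ_apply', ih, map_sum]

lemma my_iter_prod (i : ℕ) {ι : Type*} (s : Finset ι) (f : ι → A) :
    (⇑σ)^[i] (∏ j ∈ s, f j) = ∏ j ∈ s, (⇑σ)^[i] (f j) := by
  induction i with
  | zero => rfl
  | succ n ih => simp [Function.iterate_succ_apply', ih, map_prod]

end priv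

/-- free orbit sum decomposition -/
lemma my_orbit_sum {ι M : Type*} [DecidableEq ι] [AddCommMonoid M]
    (e : ι → ι) (he : Function.Injective e) (T : ι → M) (p : ℕ) (hp : 0 < p) :
    ∀ X : Finset ι, (∀ x ∈ X, e x ∈ X) →
    (∀ x ∈ X, e^[p] x = x) →
    (∀ x ∈ X, ∀ k, 0 < k → k < p → e^[k] x ≠ x) →
    ∃ R : Finset ι, R ⊆ X ∧ ∑ x ∈ X, T x = ∑ j ∈ Finset.range p, ∑ x ∈ R, T (e^[j] x) := by
  intro X
  induction X using Finset.strongInduction with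
  | _ X IH =>
    intro hcl hper hfree
    rcases X.eq_empty_or_nonempty with rfl | ⟨x, hx⟩
    · exact ⟨∅, by simp⟩
    · -- orbit of x
      have horb : ∀ j, e^[j] x ∈ X := by
        intro j; induction j with
        | zero => exact hx
        | succ n ih => rw [Function.iterate_succ_apply']; exact hcl _ ih
      set O : Finset ι := (Finset.range p).image (fun j => e^[j] x) with hO
      have hinj : ∀ j ∈ Finset.range p, ∀ k ∈ Finset.range p,
          e^[j] x = e^[k] x → j = k := by
        intro j hj k hk hjk
        by_contra hne
        wlog hlt : j < k generalizing j k
        · exact this k hk j hj hjk.symm (Ne.symm hne) (by omega)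
        · have : e^[j] (e^[k-j] x) = e^[j] x := by
            rw [← Function.iterate_add_apply]
            rw [show j + (k - j) = k by omega, hjk]
          have h2 : e^[k-j] x = x := Function.Injective.iterate he j this
          exact hfree x hx (k-j) (by omega) (by simp at hj hk; omega) h2
      have hOX : O ⊆ X := by
        intro y hy
        rcases Finset.mem_image.1 hy with ⟨j, _, rfl⟩
        exact horb j
      have hxO : x ∈ O := Finset.mem_image.2 ⟨0, by simpa using hp, rfl⟩
      have hss : X \ O ⊂ X := Finset.sdiff_ssubset hOX ⟨x, hxO⟩
      -- X \ O satisfies hypotheses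
      have hcl' : ∀ y ∈ X \ O, e y ∈ X \ O := by
        intro y hy
        rcases Finset.mem_sdiff.1 hy with ⟨hyX, hyO⟩
        refine Finset.mem_sdiff.2 ⟨hcl _ hyX, ?_⟩
        intro hcon
        rcases Finset.mem_image.1 hcon with ⟨j, hj, hej⟩
        rcases Nat.eq_zero_or_pos j with rfl | hjpos
        · -- e y = x = e^[p] x = e (e^[p-1] x)
          have h1 : e (e^[p-1] x) = e y := by
            rw [← Function.iterate_succ_apply' e (p-1) x,
              show (p-1).succ = p from by omega, hper x hx]
            exact hej
          have h2 := he h1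
          exact hyO (by rw [← h2]; exact Finset.mem_image.2 ⟨p-1, Finset.mem_range.2 (by omega), rfl⟩)
        · have h1 : e (e^[j-1] x) = e y := by
            rw [← Function.iterate_succ_apply' e (j-1) x, show (j-1).succ = j from by omega]
            exact hej
          have h2 := he h1
          exact hyO (by rw [← h2]; exact Finset.mem_image.2 ⟨j-1, Finset.mem_range.2 (by simp at hj; omega), rfl⟩)
      obtain ⟨R', hR'sub, hR'⟩ := IH (X \ O) hss hcl'
        (fun y hy => hper y (Finset.mem_sdiff.1 hy).1)
        (fun y hy => hfree y (Finset.mem_sdiff.1 hy).1)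
      refine ⟨insert x R', ?_, ?_⟩
      · intro y hy
        rcases Finset.mem_insert.1 hy with rfl | hy
        · exact hx
        · exact (Finset.mem_sdiff.1 (hR'sub hy)).1
      · have hxR' : x ∉ R' := fun h => (Finset.mem_sdiff.1 (hR'sub h)).2 hxO
        have hsplit : ∑ y ∈ X, T y = ∑ y ∈ X \ O, T y + ∑ y ∈ O, T y :=
          (Finset.sum_sdiff hOX).symm
        have hOsum : ∑ y ∈ O, T y = ∑ j ∈ Finset.range p, T (e^[j] x) :=
          Finset.sum_image hinj
        rw [hsplit, hOsum, hR', ← Finset.sum_add_distrib]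
        refine Finset.sum_congr rfl fun j _ => ?_
        rw [Finset.sum_insert hxR']
        exact add_comm _ _

section chunk2
variable {A : Type*} [CommRing A]

lemma my_add_inj {p : ℕ} : Function.Injective (fun x : ZMod p => x + 1) :=
  fun x y h => add_right_cancel h

lemma my_iter_periodic (p : ℕ) (σ : A ≃+* A) (hσ : ∀ a, (⇑σ)^[p] a = a)
    (q : ℕ) (y : A) : (⇑σ)^[p * q] y = y := by
  induction q with
  | zero => simp
  | succ n ih => rw [Nat.mul_succ, Function.iterate_add_apply, hσ, ih]

lemma my_iter_mod (p : ℕ) [NeZero p] (σ : A ≃+* A) (hσ : ∀ a, (⇑σ)^[p] a = a)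
    (k : ℕ) (x : A) : (⇑σ)^[k] x = (⇑σ)^[k % p] x := by
  conv_lhs => rw [show k = p * (k / p) + k % p from (Nat.div_add_mod k p).symm,
    Function.iterate_add_apply, my_iter_periodic p σ hσ]

lemma my_step (p : ℕ) (hp : p.Prime) (σ : A ≃+* A) (hσ : ∀ a, (⇑σ)^[p] a = a)
    (i : ZMod p) (x : A) : σ ((⇑σ)^[i.val] x) = (⇑σ)^[(i + 1).val] x := by
  haveI : NeZero p := ⟨hp.ne_zero⟩
  haveI : Fact (1 < p) := ⟨hp.one_lt⟩
  rw [← Function.iterate_succ_apply' σ i.val x, ZMod.val_add, ZMod.val_one,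
    ← my_iter_mod p σ hσ]

lemma my_prod_fixed (p : ℕ) (hp : 0 < p) (σ : A ≃+* A) (hσ : ∀ a, (⇑σ)^[p] a = a)
    (a : A) : σ (∏ i ∈ Finset.range p, (⇑σ)^[i] a) = ∏ i ∈ Finset.range p, (⇑σ)^[i] a := by
  obtain ⟨n, rfl⟩ : ∃ n, p = n + 1 := ⟨p - 1, by omega⟩
  rw [map_prod]
  calc ∏ i ∈ Finset.range (n+1), σ ((⇑σ)^[i] a)
      = ∏ i ∈ Finset.range (n+1), (⇑σ)^[i+1] a :=
        Finset.prod_congr rfl fun i _ => (Function.iterate_succ_apply' _ _ _).symm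
    _ = (∏ i ∈ Finset.range n, (⇑σ)^[i+1] a) * (⇑σ)^[n+1] a := Finset.prod_range_succ _ n
    _ = (∏ i ∈ Finset.range n, (⇑σ)^[i+1] a) * (⇑σ)^[0] a := by rw [hσ a]; rfl
    _ = ∏ i ∈ Finset.range (n+1), (⇑σ)^[i] a := (Finset.prod_range_succ' (fun i => (⇑σ)^[i] a) n).symm

lemma my_reidx_prod (p : ℕ) [NeZero p] (g : ℕ → A) :
    ∏ i : ZMod p, g i.val = ∏ i ∈ Finset.range p, g i :=
  Finset.prod_bij (fun z _ => z.val) (fun z _ => Finset.mem_range.2 (ZMod.val_lt z))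
    (fun z _ w _ h => ZMod.val_injective p h)
    (fun i hi => ⟨(i : ZMod p), Finset.mem_univ _,
      ZMod.val_cast_of_lt (Finset.mem_range.1 hi)⟩)
    (fun z _ => rfl)

lemma my_shift_iter_mem (p : ℕ) [NeZero p] (k : ℕ) (S : Finset (ZMod p)) (x : ZMod p) :
    x ∈ (fun S : Finset (ZMod p) => S.image (· + 1))^[k] S ↔ x - (k : ZMod p) ∈ S := by
  induction k generalizing x with
  | zero => simp
  | succ n ih =>
    rw [Function.iterate_succ_apply']
    simp only [Finset.mem_image]
    constructor
    · rintro ⟨y, hy, rfl⟩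
      rw [ih] at hy
      have h2 : y + 1 - ((n : ZMod p) + 1) = y - n := by ring
      rw [Nat.cast_succ, h2]
      exact hy
    · intro h
      refine ⟨x - 1, ?_, by ring⟩
      rw [ih]
      have h2 : x - 1 - (n : ZMod p) = x - ((n : ZMod p) + 1) := by ring
      rw [Nat.cast_succ] at h
      rw [h2]
      exact h

lemma my_key (p : ℕ) (hp : p.Prime) (σ : A ≃+* A)
    (hσ : ∀ a, (⇑σ)^[p] a = a) (a b : A) :
    ∃ c : A, ∏ i ∈ Finset.range p, (⇑σ)^[i] (a+b) =
      ∏ i ∈ Finset.range p, (⇑σ)^[i] a + ∏ i ∈ Finset.range p, (⇑σ)^[i] b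
      + ∑ i ∈ Finset.range p, (⇑σ)^[i] c := by
  classical
  haveI : Fact p.Prime := ⟨hp⟩
  haveI : NeZero p := ⟨hp.ne_zero⟩
  haveI : Nonempty (ZMod p) := ⟨0⟩
  set fa : ZMod p → A := fun i => (⇑σ)^[i.val] a with hfa
  set fb : ZMod p → A := fun i => (⇑σ)^[i.val] b with hfb
  set T : Finset (ZMod p) → A :=
    fun S => (∏ i ∈ S, fa i) * ∏ i ∈ Finset.univ \ S, fb i with hT
  set e : Finset (ZMod p) → Finset (ZMod p) := fun S => S.image (· + 1) with he
  have he_inj : Function.Injective e := Finset.image_injective my_add_inj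
  -- equivariance
  have hTe : ∀ S, T (e S) = σ (T S) := by
    intro S
    have himg : ∀ (f : ZMod p → A) (S' : Finset (ZMod p)),
        ∏ i ∈ S'.image (· + 1), f i = ∏ i ∈ S', f (i + 1) :=
      fun f S' => Finset.prod_image fun x _ y _ h => my_add_inj h
    have hsurj : Function.Surjective (fun x : ZMod p => x + 1) :=
      fun x => ⟨x - 1, by ring⟩
    have hcompl : (Finset.univ : Finset (ZMod p)) \ S.image (· + 1)
        = (Finset.univ \ S).image (· + 1) := by
      rw [Finset.image_sdiff _ _ my_add_inj, Finset.image_univ_of_surjective hsurj]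
    simp only [hT, he, map_mul, map_prod]
    rw [himg fa S, hcompl, himg fb _]
    congr 1
    · exact Finset.prod_congr rfl fun i _ => (my_step p hp σ hσ i a).symm
    · exact Finset.prod_congr rfl fun i _ => (my_step p hp σ hσ i b).symm
  have hTek : ∀ (k : ℕ) (S : Finset (ZMod p)), T (e^[k] S) = (⇑σ)^[k] (T S) := by
    intro k
    induction k with
    | zero => intro S; rfl
    | succ n ih =>
      intro S
      rw [Function.iterate_succ_apply', Function.iterate_succ_apply', hTe, ih]
  -- the set of proper nonempty subsets
  set X : Finset (Finset (ZMod p)) :=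
    ((Finset.univ : Finset (ZMod p)).powerset.erase Finset.univ).erase ∅ with hX
  have hmemX : ∀ S, S ∈ X ↔ S ≠ ∅ ∧ S ≠ Finset.univ := by
    intro S
    simp only [hX, Finset.mem_erase, Finset.mem_powerset, Finset.subset_univ, and_true]
  -- closure
  have hcl : ∀ S ∈ X, e S ∈ X := by
    intro S hS
    rw [hmemX] at hS ⊢
    constructor
    · simp only [he, ne_eq, Finset.image_eq_empty]; exact hS.1
    · intro hcon
      apply hS.2
      apply Finset.eq_univ_of_card
      have hc : (e S).card = S.card := Finset.card_image_of_injective _ my_add_inj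
      rw [← hc, hcon, Finset.card_univ]
  -- periodicity
  have hper : ∀ S ∈ X, e^[p] S = S := by
    intro S _
    ext x
    rw [he, my_shift_iter_mem p p S x]
    simp
  -- freeness
  have hfree : ∀ S ∈ X, ∀ k, 0 < k → k < p → e^[k] S ≠ S := by
    intro S hS k hk1 hk2 hcon
    rw [hmemX] at hS
    have hmem : ∀ x : ZMod p, x ∈ S ↔ x - (k : ZMod p) ∈ S := by
      intro x
      conv_lhs => rw [← hcon]
      rw [he, my_shift_iter_mem p k S x]
    have hknz : (k : ZMod p) ≠ 0 := by
      rw [Ne, ZMod.natCast_eq_zero_iff]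
      intro hdvd
      exact absurd (Nat.le_of_dvd hk1 hdvd) (by omega)
    obtain ⟨s, hs⟩ := Finset.nonempty_iff_ne_empty.2 hS.1
    have hstep : ∀ n : ℕ, s + n • (k : ZMod p) ∈ S := by
      intro n
      induction n with
      | zero => simpa using hs
      | succ m ih =>
        have h2 : s + (m + 1) • (k : ZMod p) - (k : ZMod p) = s + m • (k : ZMod p) := by
          rw [succ_nsmul]; ring
        refine (hmem _).2 ?_
        rw [h2]
        exact ih
    apply hS.2
    apply Finset.eq_univ_of_forall
    intro t
    have h1 : (((t - s) * (k : ZMod p)⁻¹).val : ZMod p) = (t - s) * (k : ZMod p)⁻¹ := by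
      rw [ZMod.natCast_val, ZMod.cast_id]
    have h3 := hstep ((t - s) * (k : ZMod p)⁻¹).val
    rw [nsmul_eq_mul, h1, mul_assoc, inv_mul_cancel₀ hknz, mul_one] at h3
    have h4 : s + (t - s) = t := by ring
    rwa [h4] at h3
  obtain ⟨R, hRX, hsum⟩ := my_orbit_sum e he_inj T p hp.pos X hcl hper hfree
  refine ⟨∑ S ∈ R, T S, ?_⟩
  have huniv_ne : (Finset.univ : Finset (ZMod p)) ≠ ∅ := Finset.univ_nonempty.ne_empty
  have h1 : (∅ : Finset (ZMod p)) ∈ Finset.univ.powerset.erase Finset.univ :=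
    Finset.mem_erase.2 ⟨Ne.symm huniv_ne, Finset.empty_mem_powerset _⟩
  have hpow : (Finset.univ : Finset (ZMod p)).powerset
      = insert Finset.univ (insert ∅ X) := by
    rw [hX, Finset.insert_erase h1, Finset.insert_erase (Finset.mem_powerset_self _)]
  have hu_notin : (Finset.univ : Finset (ZMod p)) ∉ insert ∅ X := by
    simp only [Finset.mem_insert, hmemX]
    push_neg
    exact ⟨Finset.univ_nonempty, fun _ => rfl⟩
  have he_notin : (∅ : Finset (ZMod p)) ∉ X := by
    rw [hmemX]; push_neg; intro h; exact absurd h Finset.not_nonempty_empty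
  have hTuniv : T Finset.univ = ∏ i ∈ Finset.range p, (⇑σ)^[i] a := by
    simp only [hT, Finset.sdiff_self, Finset.prod_empty, mul_one]
    exact my_reidx_prod p (fun n => (⇑σ)^[n] a)
  have hTempty : T ∅ = ∏ i ∈ Finset.range p, (⇑σ)^[i] b := by
    simp only [hT, Finset.prod_empty, one_mul, Finset.sdiff_empty]
    exact my_reidx_prod p (fun n => (⇑σ)^[n] b)
  have hNorm : ∑ S ∈ X, T S
      = ∑ i ∈ Finset.range p, (⇑σ)^[i] (∑ S ∈ R, T S) := by
    rw [hsum]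
    refine Finset.sum_congr rfl fun j _ => ?_
    rw [my_iter_sum]
    exact (Finset.sum_congr rfl fun S _ => (hTek j S).symm).symm
  calc ∏ i ∈ Finset.range p, (⇑σ)^[i] (a+b)
      = ∏ i : ZMod p, (⇑σ)^[i.val] (a+b) := (my_reidx_prod p (fun n => (⇑σ)^[n] (a+b))).symm
    _ = ∏ i : ZMod p, (fa i + fb i) :=
        Finset.prod_congr rfl fun i _ => my_iter_add σ i.val a b
    _ = ∑ S ∈ Finset.univ.powerset, T S := Finset.prod_add fa fb Finset.univ
    _ = _ := by
        rw [hpow, Finset.sum_insert hu_notin, Finset.sum_insert he_notin,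
          hTuniv, hTempty, hNorm]
        ring
end chunk2

section chunk3
variable {A : Type*} [CommRing A]

lemma my_sum_fixed (p : ℕ) (hp : 0 < p) (σ : A ≃+* A) (hσ : ∀ a, (⇑σ)^[p] a = a)
    (a : A) : σ (∑ i ∈ Finset.range p, (⇑σ)^[i] a) = ∑ i ∈ Finset.range p, (⇑σ)^[i] a := by
  obtain ⟨n, rfl⟩ : ∃ n, p = n + 1 := ⟨p - 1, by omega⟩
  rw [map_sum]
  calc ∑ i ∈ Finset.range (n+1), σ ((⇑σ)^[i] a)
      = ∑ i ∈ Finset.range (n+1), (⇑σ)^[i+1] a :=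
        Finset.sum_congr rfl fun i _ => (Function.iterate_succ_apply' _ _ _).symm
    _ = (∑ i ∈ Finset.range n, (⇑σ)^[i+1] a) + (⇑σ)^[n+1] a := Finset.sum_range_succ _ n
    _ = (∑ i ∈ Finset.range n, (⇑σ)^[i+1] a) + (⇑σ)^[0] a := by rw [hσ a]; rfl
    _ = ∑ i ∈ Finset.range (n+1), (⇑σ)^[i] a :=
        (Finset.sum_range_succ' (fun i => (⇑σ)^[i] a) n).symm
end chunk3

/--
Let `p` be a prime, `A` a commutative ring, `σ` a ring automorphism of `A` with
`σ^p = id`, `Ā = A^σ/N(A)` with quotient map `π`, `B` an integral domain and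
`χ : Ā → B` a ring homomorphism.  Then there is a unique ring homomorphism
`χ̃ : A → B` with `χ̃(a) = χ(π a)^p` for all `a ∈ A^σ`; explicitly
`χ̃(a) = χ(π(σ⁰(a)⋯σ^{p-1}(a)))`, and `χ̃ ∘ σ = χ̃`.
(The first two clauses record that `N(A)` consists exactly of the norms and that
products of conjugates lie in `A^σ`.)
-/
theorem unique_pth_power_extension_of_character
    (p : ℕ) (hp : p.Prime)
    (A : Type*) [CommRing A]
    (σ : A ≃+* A) (hσ : ∀ a, (⇑σ)^[p] a = a)
    (B : Type*) [CommRing B] [IsDomain B]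
    (χ : (↥(fixedSubring σ) ⧸ normIdeal p σ) →+* B) :
    -- the ideal N(A) consists exactly of the norms
    ((∀ x : fixedSubring σ,
        x ∈ normIdeal p σ ↔ ∃ a : A, (x : A) = ∑ i ∈ Finset.range p, (⇑σ)^[i] a)
    -- products of conjugates are fixed by σ
    ∧ (∀ a : A, (∏ i ∈ Finset.range p, (⇑σ)^[i] a) ∈ fixedSubring σ)
    -- existence and uniqueness of the extension of χ^p
    ∧ (∃! χt : A →+* B,
        ∀ (a : A) (ha : a ∈ fixedSubring σ),
          χt a = (χ (Ideal.Quotient.mk (normIdeal p σ) ⟨a, ha⟩)) ^ p)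
    -- the extension is given explicitly by the product formula and is σ-invariant
    ∧ (∀ χt : A →+* B,
        (∀ (a : A) (ha : a ∈ fixedSubring σ),
          χt a = (χ (Ideal.Quotient.mk (normIdeal p σ) ⟨a, ha⟩)) ^ p) →
        (∀ (a : A) (h : (∏ i ∈ Finset.range p, (⇑σ)^[i] a) ∈ fixedSubring σ),
          χt a = χ (Ideal.Quotient.mk (normIdeal p σ)
            ⟨∏ i ∈ Finset.range p, (⇑σ)^[i] a, h⟩)) ∧
        (∀ a : A, χt (σ a) = χt a))) := by
  classical
  haveI : Fact p.Prime := ⟨hp⟩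
  have hp0 : 0 < p := hp.pos
  have hPmem : ∀ a : A, (∏ i ∈ Finset.range p, (⇑σ)^[i] a) ∈ fixedSubring σ :=
    fun a => my_prod_fixed p hp0 σ hσ a
  have hNmem : ∀ a : A, (∑ i ∈ Finset.range p, (⇑σ)^[i] a) ∈ fixedSubring σ :=
    fun a => my_sum_fixed p hp0 σ hσ a
  -- clause 1
  have hclause1 : ∀ x : fixedSubring σ,
      x ∈ normIdeal p σ ↔ ∃ a : A, (x : A) = ∑ i ∈ Finset.range p, (⇑σ)^[i] a := by
    intro x
    constructor
    · intro hx
      induction hx using Submodule.span_induction with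
      | mem y hy => exact hy
      | zero => exact ⟨0, by simp [my_iter_zero]⟩
      | add y z hy hz ihy ihz =>
        obtain ⟨a, ha⟩ := ihy
        obtain ⟨b, hb⟩ := ihz
        refine ⟨a + b, ?_⟩
        have h1 : ((y + z : fixedSubring σ) : A) = (y : A) + (z : A) := rfl
        rw [h1, ha, hb, ← Finset.sum_add_distrib]
        exact Finset.sum_congr rfl fun i _ => (my_iter_add σ i a b).symm
      | smul r y hy ihy =>
        obtain ⟨a, ha⟩ := ihy
        refine ⟨(r : A) * a, ?_⟩
        have h1 : ((r • y : fixedSubring σ) : A) = (r : A) * (y : A) := rfl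
        rw [h1, ha, Finset.mul_sum]
        refine Finset.sum_congr rfl fun i _ => ?_
        rw [my_iter_mul σ i (r : A) a, my_iter_fixed σ i (r : A) r.2]
    · rintro ⟨a, ha⟩
      exact Ideal.subset_span ⟨a, ha⟩
  -- quotient character
  set ψ : fixedSubring σ →+* B := χ.comp (Ideal.Quotient.mk (normIdeal p σ)) with hψdef
  have hψ : ∀ x, ψ x = χ (Ideal.Quotient.mk (normIdeal p σ) x) := fun _ => rfl
  set Pf : A → fixedSubring σ :=
    fun a => ⟨∏ i ∈ Finset.range p, (⇑σ)^[i] a, hPmem a⟩ with hPfdef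
  have hψnorm : ∀ c : A, ψ ⟨∑ i ∈ Finset.range p, (⇑σ)^[i] c, hNmem c⟩ = 0 := by
    intro c
    have h0 : Ideal.Quotient.mk (normIdeal p σ) ⟨∑ i ∈ Finset.range p, (⇑σ)^[i] c, hNmem c⟩
        = 0 := Ideal.Quotient.eq_zero_iff_mem.2 (Ideal.subset_span ⟨c, rfl⟩)
    rw [hψ, h0, map_zero]
  -- the extension
  let g : A →+* B :=
    { toFun := fun a => ψ (Pf a)
      map_one' := by
        show ψ (Pf 1) = 1
        have h1 : Pf 1 = 1 := Subtype.ext (by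
          show ∏ i ∈ Finset.range p, (⇑σ)^[i] (1:A) = 1
          calc ∏ i ∈ Finset.range p, (⇑σ)^[i] (1:A)
              = ∏ _i ∈ Finset.range p, (1:A) :=
                Finset.prod_congr rfl fun i _ => my_iter_one σ i
            _ = 1 := Finset.prod_const_one)
        rw [h1, map_one]
      map_mul' := by
        intro x y
        show ψ (Pf (x * y)) = ψ (Pf x) * ψ (Pf y)
        have h1 : Pf (x * y) = Pf x * Pf y := Subtype.ext (by
          show ∏ i ∈ Finset.range p, (⇑σ)^[i] (x*y)
            = (∏ i ∈ Finset.range p, (⇑σ)^[i] x) * ∏ i ∈ Finset.range p, (⇑σ)^[i] y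
          rw [← Finset.prod_mul_distrib]
          exact Finset.prod_congr rfl fun i _ => my_iter_mul σ i x y)
        simp only [h1, map_mul]
      map_zero' := by
        show ψ (Pf 0) = 0
        have h1 : Pf 0 = 0 := Subtype.ext (by
          show ∏ i ∈ Finset.range p, (⇑σ)^[i] (0:A) = 0
          calc ∏ i ∈ Finset.range p, (⇑σ)^[i] (0:A)
              = ∏ _i ∈ Finset.range p, (0:A) :=
                Finset.prod_congr rfl fun i _ => my_iter_zero σ i
            _ = 0 := by rw [Finset.prod_const, Finset.card_range, zero_pow hp.ne_zero])
        rw [h1, map_zero]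
      map_add' := by
        intro x y
        show ψ (Pf (x + y)) = ψ (Pf x) + ψ (Pf y)
        obtain ⟨c, hc⟩ := my_key p hp σ hσ x y
        have h1 : Pf (x + y) = Pf x + Pf y
            + ⟨∑ i ∈ Finset.range p, (⇑σ)^[i] c, hNmem c⟩ := Subtype.ext hc
        simp only [h1, map_add, hψnorm, add_zero] }
  have hg : ∀ a, g a = ψ (Pf a) := fun _ => rfl
  have hgspec : ∀ (a : A) (ha : a ∈ fixedSubring σ),
      g a = (χ (Ideal.Quotient.mk (normIdeal p σ) ⟨a, ha⟩)) ^ p := by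
    intro a ha
    have hPfa : Pf a = (⟨a, ha⟩ : fixedSubring σ) ^ p := by
      apply Subtype.ext
      show ∏ i ∈ Finset.range p, (⇑σ)^[i] a = _
      rw [SubmonoidClass.coe_pow]
      calc ∏ i ∈ Finset.range p, (⇑σ)^[i] a
          = ∏ _i ∈ Finset.range p, a :=
            Finset.prod_congr rfl fun i _ => my_iter_fixed σ i a ha
        _ = a ^ p := by rw [Finset.prod_const, Finset.card_range]
    rw [hg, hPfa, map_pow, hψ]
  -- characteristic p
  have hpB : (p : B) = 0 := by
    have hmemP : ((p : ℕ) : A) ∈ fixedSubring σ := by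
      show σ ((p : ℕ) : A) = ((p : ℕ) : A)
      exact map_natCast σ p
    have hsum1 : ((⟨((p : ℕ) : A), hmemP⟩ : fixedSubring σ) : A)
        = ∑ i ∈ Finset.range p, (⇑σ)^[i] (1 : A) := by
      show ((p : ℕ) : A) = _
      calc ((p : ℕ) : A) = ∑ _i ∈ Finset.range p, (1 : A) := by
            rw [Finset.sum_const, Finset.card_range, nsmul_eq_mul, mul_one]
        _ = _ := (Finset.sum_congr rfl fun i _ => my_iter_one σ i).symm
    have h0 : Ideal.Quotient.mk (normIdeal p σ) ⟨((p : ℕ) : A), hmemP⟩ = 0 :=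
      Ideal.Quotient.eq_zero_iff_mem.2 (Ideal.subset_span ⟨1, hsum1⟩)
    have h1 := hgspec ((p : ℕ) : A) hmemP
    rw [h0, map_zero, zero_pow hp.ne_zero, map_natCast g p] at h1
    exact h1
  haveI : CharP B p := (CharP.ringChar_of_prime_eq_zero hp hpB) ▸ ringChar.charP B
  haveI : ExpChar B p := ExpChar.prime hp
  have hfrob : ∀ x y : B, x ^ p = y ^ p → x = y := fun x y h =>
    frobenius_inj B p (by rwa [frobenius_def, frobenius_def])
  -- σ-invariance of any hom satisfying the spec
  have hinv : ∀ χt : A →+* B,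
      (∀ (a : A) (ha : a ∈ fixedSubring σ),
        χt a = (χ (Ideal.Quotient.mk (normIdeal p σ) ⟨a, ha⟩)) ^ p) →
      ∀ x : A, χt (σ x) = χt x := by
    intro χt hspec
    have hsum0 : ∀ x : A, ∑ i ∈ Finset.range p, χt ((⇑σ)^[i] x) = 0 := by
      intro x
      have h0 : Ideal.Quotient.mk (normIdeal p σ)
          ⟨∑ i ∈ Finset.range p, (⇑σ)^[i] x, hNmem x⟩ = 0 :=
        Ideal.Quotient.eq_zero_iff_mem.2 (Ideal.subset_span ⟨x, rfl⟩)
      have h1 := hspec (∑ i ∈ Finset.range p, (⇑σ)^[i] x) (hNmem x)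
      rw [h0, map_zero, zero_pow hp.ne_zero] at h1
      rw [← map_sum χt (fun i => (⇑σ)^[i] x) (Finset.range p)]
      exact h1
    by_contra hcon
    push_neg at hcon
    obtain ⟨x0, hx0⟩ := hcon
    set mh : ℕ → (A →* B) := fun i =>
      { toFun := fun x => χt ((⇑σ)^[i] x)
        map_one' := by show χt ((⇑σ)^[i] 1) = 1; rw [my_iter_one, map_one]
        map_mul' := fun x y => by
          show χt ((⇑σ)^[i] (x * y)) = χt ((⇑σ)^[i] x) * χt ((⇑σ)^[i] y)
          rw [my_iter_mul, map_mul] } with hmhdef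
    have hmh_inj : ∀ i ∈ Finset.range p, ∀ j ∈ Finset.range p, mh i = mh j → i = j := by
      intro i hi j hj hij
      rw [Finset.mem_range] at hi hj
      by_contra hne
      wlog hlt : i < j generalizing i j
      · exact this j hj i hi hij.symm (Ne.symm hne) (by omega)
      have hd : ∀ y : A, χt ((⇑σ)^[j-i] y) = χt y := by
        intro y
        have happ := DFunLike.congr_fun hij ((⇑σ.symm)^[i] y)
        simp only [hmhdef, MonoidHom.coe_mk, OneHom.coe_mk] at happ
        have hiy : (⇑σ)^[i] ((⇑σ.symm)^[i] y) = y :=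
          Function.LeftInverse.iterate σ.apply_symm_apply i y
        have hjy : (⇑σ)^[j] ((⇑σ.symm)^[i] y) = (⇑σ)^[j-i] y := by
          have h5 : (⇑σ)^[(j-i)+i] ((⇑σ.symm)^[i] y) = (⇑σ)^[j-i] y := by
            rw [Function.iterate_add_apply, hiy]
          rw [show (j-i)+i = j from by omega] at h5
          exact h5
        rw [hiy, hjy] at happ
        exact happ.symm
      have hdm : ∀ (m : ℕ) (y : A), χt ((⇑σ)^[(j-i)*m] y) = χt y := by
        intro m
        induction m with
        | zero => intro y; rfl
        | succ n ih =>
          intro y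
          rw [Nat.mul_succ, Function.iterate_add_apply, ih, hd y]
      have hdz : ((j - i : ℕ) : ZMod p) ≠ 0 := by
        rw [Ne, ZMod.natCast_eq_zero_iff]
        intro hdvd
        exact absurd (Nat.le_of_dvd (by omega) hdvd) (by omega)
      set m := (((j - i : ℕ) : ZMod p)⁻¹).val with hm
      have hdm1 : ((j - i) * m) % p = 1 := by
        haveI : NeZero p := ⟨hp.ne_zero⟩
        have h2 : (((j - i) * m : ℕ) : ZMod p) = ((1 : ℕ) : ZMod p) := by
          push_cast
          rw [hm, ZMod.natCast_val, ZMod.cast_id, mul_inv_cancel₀ hdz]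
        have h3 := (ZMod.natCast_eq_natCast_iff _ _ _).1 h2
        have h4 : ((j - i) * m) % p = 1 % p := h3
        rwa [Nat.mod_eq_of_lt hp.one_lt] at h4
      have hfin : χt (σ x0) = χt x0 := by
        have h4 := hdm m x0
        rw [show (j - i) * m = p * (((j-i)*m)/p) + 1 from by
            conv_lhs => rw [← Nat.div_add_mod ((j-i)*m) p]
            rw [hdm1]] at h4
        rw [Function.iterate_add_apply, my_iter_periodic p σ hσ,
          Function.iterate_one] at h4
        exact h4
      exact hx0 hfin
    have hLI := linearIndependent_monoidHom A B
    rw [linearIndependent_iff'] at hLI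
    refine one_ne_zero (α := B)
      (hLI ((Finset.range p).image mh) (fun _ => (1:B)) ?_ (mh 1)
        (Finset.mem_image.2 ⟨1, Finset.mem_range.2 hp.one_lt, rfl⟩))
    rw [Finset.sum_image hmh_inj]
    funext x
    simp only [Finset.sum_apply, Pi.smul_apply, one_smul, Pi.zero_apply, hmhdef,
      MonoidHom.coe_mk, OneHom.coe_mk]
    exact hsum0 x
  -- explicit formula for any hom satisfying the spec
  have hformula : ∀ χt : A →+* B,
      (∀ (a : A) (ha : a ∈ fixedSubring σ),
        χt a = (χ (Ideal.Quotient.mk (normIdeal p σ) ⟨a, ha⟩)) ^ p) →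
      ∀ (a : A) (h : (∏ i ∈ Finset.range p, (⇑σ)^[i] a) ∈ fixedSubring σ),
        χt a = χ (Ideal.Quotient.mk (normIdeal p σ)
          ⟨∏ i ∈ Finset.range p, (⇑σ)^[i] a, h⟩) := by
    intro χt hspec a h
    have hinv' := hinv χt hspec
    have hiter : ∀ (i : ℕ) (x : A), χt ((⇑σ)^[i] x) = χt x := by
      intro i x
      induction i with
      | zero => rfl
      | succ n ih => rw [Function.iterate_succ_apply', hinv', ih]
    have h1 : χt (∏ i ∈ Finset.range p, (⇑σ)^[i] a) = (χt a) ^ p := by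
      rw [map_prod]
      calc ∏ i ∈ Finset.range p, χt ((⇑σ)^[i] a)
          = ∏ _i ∈ Finset.range p, χt a :=
            Finset.prod_congr rfl fun i _ => hiter i a
        _ = (χt a) ^ p := by rw [Finset.prod_const, Finset.card_range]
    have h2 := hspec _ h
    rw [h1] at h2
    exact hfrob _ _ h2
  refine ⟨hclause1, hPmem, ⟨g, hgspec, ?_⟩, ?_⟩
  · intro χt hχt
    apply RingHom.ext
    intro a
    rw [hformula χt hχt a (hPmem a), hformula g hgspec a (hPmem a)]
  · intro χt hχt
    exact ⟨hformula χt hχt, hinv χt hχt⟩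
end

section
/- Let k be a perfect field of characteristic 2, V a k-vector space, and Q : V → k a quadratic form with polar form B(x,y) = Q(x+y) − Q(x) − Q(y). Let A : V → V be a k-linear map satisfying B(Ax,Ay) = B(x,y) for all x,y ∈ V. Then there exists a unique k-linear functional ℓ : V → k such that Q(Ax) − Q(x) = ℓ(x)² for all x ∈ V. -/
/--
Let `k` be a perfect field of characteristic `2`, `V` a `k`-vector space and `Q` a
quadratic form on `V` with polar form `B(x,y) = Q(x+y) − Q(x) − Q(y)`.  If `A : V → V`
is a `k`-linear map preserving `B`, then there is a unique linear functional
`ℓ : V → k` with `Q(Ax) − Q(x) = ℓ(x)²` for all `x`.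
-/
theorem exists_unique_dickson_functional
    (k : Type*) [Field k] [CharP k 2] [PerfectField k]
    (V : Type*) [AddCommGroup V] [Module k V]
    (Q : QuadraticForm k V)
    (A : V →ₗ[k] V)
    (hA : ∀ x y : V, QuadraticMap.polar (⇑Q) (A x) (A y) = QuadraticMap.polar (⇑Q) x y) :
    ∃! ℓ : V →ₗ[k] k, ∀ x : V, Q (A x) - Q x = ℓ x ^ 2 := by
  have hp : Fact (Nat.Prime 2) := ⟨Nat.prime_two⟩
  set g : k ≃+* k := (frobeniusEquiv k 2).symm with hg
  have hgf : ∀ a : k, (g a) ^ 2 = a := by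
    intro a
    have := (frobeniusEquiv k 2).apply_symm_apply a
    rwa [frobeniusEquiv_apply, frobenius_def] at this
  set f : V → k := fun x => Q (A x) - Q x with hf
  have hadd : ∀ x y, f (x + y) = f x + f y := by
    intro x y
    have h1 : Q (A x + A y) = QuadraticMap.polar (⇑Q) (A x) (A y) + Q (A x) + Q (A y) := by
      simp [QuadraticMap.polar]; ring
    have h2 : Q (x + y) = QuadraticMap.polar (⇑Q) x y + Q x + Q y := by
      simp [QuadraticMap.polar]; ring
    simp only [hf, map_add, h1, h2, hA]
    ring
  have hsmul : ∀ (c : k) (x : V), f (c • x) = c ^ 2 * f x := by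
    intro c x
    simp only [hf, map_smul, QuadraticMap.map_smul, smul_eq_mul]
    ring
  refine ⟨{ toFun := fun x => g (f x),
            map_add' := by intro x y; show g (f (x+y)) = g (f x) + g (f y); rw [hadd]; exact map_add g _ _,
            map_smul' := by
              intro c x
              simp only [hsmul, RingHom.id_apply, smul_eq_mul]
              rw [show c ^ 2 * f x = (frobeniusEquiv k 2 c) * f x by
                simp [frobenius_def], map_mul]
              rw [show g ((frobeniusEquiv k 2) c) = c from (frobeniusEquiv k 2).symm_apply_apply c] }, ?_, ?_⟩
  · intro x
    exact (hgf (f x)).symm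
  · intro ℓ hℓ
    ext x
    have h1 : ℓ x ^ 2 = (g (f x)) ^ 2 := by rw [hgf]; exact (hℓ x).symm
    have : frobenius k 2 (ℓ x) = frobenius k 2 (g (f x)) := by
      simpa [frobenius_def] using h1
    exact frobenius_inj k 2 this
end
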